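/- Let a, b be real numbers with a > -1, -1 < b < 0 and |b| < 1 + a, and let β, ν ∈ [0,1] satisfy 0 ≤ βν < 1 + b. Then there exists a constant C > 0, depending only on a, b, β, ν, such that for all t > s > t' > s' > 0: (1/(2Β(a+1,b+1))) ∫_{s'}^{t'} u^a ((s-u)^b - (t-u)^b) du ≤ C · max((s')^a, s^a) · (t-s)^β · (t'-s')^{1+b-βν} · (t-t')^{-β(1-ν)}. (The left-hand side is nonnegative and equals the increment covariance E[(B^{a,b}_t - B^{a,b}_s)(B^{a,b}_{t'} - B^{a,b}_{s'})] of the weighted fractional Brownian motion.) -/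

import Mathlib

open Real MeasureTheory

/-- The Euler Beta function. -/
noncomputable def Beta (x y : ℝ) : ℝ := Real.Gamma x * Real.Gamma y / Real.Gamma (x + y)

/-- The covariance function `R_{a,b}(t,s)` of the weighted fractional Brownian motion. -/
noncomputable def R (a b t s : ℝ) : ℝ :=
  (1 / (2 * Beta (a + 1) (b + 1))) *
    ∫ u in (0:ℝ)..(min t s), u ^ a * ((t - u) ^ b + (s - u) ^ b)

/-- Bernoulli-type: `z^b ≥ 1 + b(z-1)` for `z ≥ 1`, `b ≤ 0`. -/
lemma aux_bernoulli {z b : ℝ} (hz : 1 ≤ z) (hb : b ≤ 0) : 1 + b * (z - 1) ≤ z ^ b := by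
  have hz0 : 0 < z := lt_of_lt_of_le one_pos hz
  have h1 : Real.log z ≤ z - 1 := Real.log_le_sub_one_of_pos hz0
  have h2 : b * (z - 1) ≤ b * Real.log z := mul_le_mul_of_nonpos_left h1 hb
  have h3 : 1 + b * Real.log z ≤ Real.exp (b * Real.log z) := by
    linarith [Real.add_one_le_exp (b * Real.log z)]
  rw [Real.rpow_def_of_pos hz0, mul_comm (Real.log z) b]
  linarith

private lemma rpow_split {A P : ℝ} (hA : 0 < A) : A ^ P = A * A ^ (P - 1) := by
  have h := Real.rpow_add hA 1 (P - 1)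
  rw [Real.rpow_one] at h
  rw [show P = 1 + (P - 1) by ring, h]
  ring_nf

/-- Subadditivity of rpow for exponents in (0,1]. -/
lemma aux_subadd {A B P : ℝ} (hA : 0 < A) (hB : 0 < B) (hP0 : 0 < P) (hP1 : P ≤ 1) :
    (A + B) ^ P ≤ A ^ P + B ^ P := by
  have hAB : 0 < A + B := by linarith
  rw [rpow_split hA, rpow_split hB, rpow_split hAB, add_mul]
  exact add_le_add
    (mul_le_mul_of_nonneg_left (Real.rpow_le_rpow_of_nonpos hA (by linarith) (by linarith)) hA.le)
    (mul_le_mul_of_nonneg_left (Real.rpow_le_rpow_of_nonpos hB (by linarith) (by linarith)) hB.le)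
lemma aux_ptwise {b β ν x y : ℝ} (hb0 : -1 < b) (hb1 : b < 0)
    (hβ0 : 0 ≤ β) (hβ1 : β ≤ 1) (hν0 : 0 ≤ ν) (hν1 : ν ≤ 1)
    (hx : 0 < x) (hxy : x < y) :
    x ^ b - y ^ b ≤ |b| ^ (β * ν) * (y - x) ^ β * x ^ (b - β * ν) * y ^ (-(β * (1 - ν))) := by
  have hy : 0 < y := hx.trans hxy
  have hyx : 0 < y - x := by linarith
  have hxb : 0 < x ^ b := Real.rpow_pos_of_pos hx b
  have hD : 0 < x ^ b - y ^ b := sub_pos.mpr (Real.rpow_lt_rpow_of_neg hx hxy hb1)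
  have hb' : (0:ℝ) < |b| := abs_pos.mpr hb1.ne
  have hz : 1 ≤ y / x := (one_le_div hx).mpr hxy.le
  have hz0 : 0 < y / x := by positivity
  have hzb : y ^ b = x ^ b * (y / x) ^ b := by
    rw [← Real.mul_rpow hx.le hz0.le]
    congr 1
    field_simp
  have he1 : (0:ℝ) ≤ 1 - β := by linarith
  have he2 : (0:ℝ) ≤ β * ν := mul_nonneg hβ0 hν0
  have he3 : (0:ℝ) ≤ β * (1 - ν) := mul_nonneg hβ0 (by linarith)
  -- Bound 1
  have B1 : x ^ b - y ^ b ≤ x ^ b := by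
    have := Real.rpow_pos_of_pos hy b; linarith
  -- Bound 2 : via Bernoulli
  have B2 : x ^ b - y ^ b ≤ |b| * ((y - x) * x ^ (b - 1)) := by
    have hber := aux_bernoulli hz hb1.le
    have h4 : x ^ b - y ^ b ≤ x ^ b * (-b * (y / x - 1)) := by
      rw [hzb]
      have := mul_le_mul_of_nonneg_left hber hxb.le
      nlinarith
    have h5 : x ^ b * (-b * (y / x - 1)) = |b| * ((y - x) * x ^ (b - 1)) := by
      have h : x ^ (b - 1) = x ^ b / x := by rw [Real.rpow_sub hx, Real.rpow_one]
      rw [abs_of_neg hb1, h]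
      field_simp
      try ring
      try tauto
    linarith [h4, h5.le]
  -- Bound 3
  have B3 : x ^ b - y ^ b ≤ x ^ b * ((y - x) * y ^ (-1:ℝ)) := by
    have h6 : (y / x) ^ (-1:ℝ) ≤ (y / x) ^ b := Real.rpow_le_rpow_of_exponent_le hz (by linarith)
    have h7 : (y / x) ^ (-1:ℝ) = x / y := by
      rw [Real.rpow_neg_one]
      field_simp
    have h8 : x ^ b - y ^ b ≤ x ^ b * (1 - x / y) := by
      rw [hzb]
      have := mul_le_mul_of_nonneg_left (h7 ▸ h6) hxb.le
      nlinarith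
    have h9 : x ^ b * (1 - x / y) = x ^ b * ((y - x) * y ^ (-1:ℝ)) := by
      rw [Real.rpow_neg_one]
      field_simp
    linarith [h8, h9.le]
  -- interpolation
  have hsplit : x ^ b - y ^ b =
      (x ^ b - y ^ b) ^ (1 - β) * ((x ^ b - y ^ b) ^ (β * ν) * (x ^ b - y ^ b) ^ (β * (1 - ν))) := by
    rw [← Real.rpow_add hD, ← Real.rpow_add hD, show (1 - β) + (β * ν + β * (1 - ν)) = 1 by ring,
      Real.rpow_one]
  have key : x ^ b - y ^ b ≤
      (x ^ b) ^ (1 - β) * ((|b| * ((y - x) * x ^ (b - 1))) ^ (β * ν) *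
        ((x ^ b * ((y - x) * y ^ (-1:ℝ))) ^ (β * (1 - ν)))) := by
    nth_rewrite 1 [hsplit]
    refine mul_le_mul (Real.rpow_le_rpow hD.le B1 he1)
      (mul_le_mul (Real.rpow_le_rpow hD.le B2 he2) (Real.rpow_le_rpow hD.le B3 he3)
        (Real.rpow_nonneg hD.le _) (Real.rpow_nonneg (by positivity) _))
      (mul_nonneg (Real.rpow_nonneg hD.le _) (Real.rpow_nonneg hD.le _))
      (Real.rpow_nonneg hxb.le _)
  refine key.trans (le_of_eq ?_)
  rw [← Real.rpow_mul hx.le, Real.mul_rpow hb'.le (by positivity),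
    Real.mul_rpow hyx.le (by positivity), ← Real.rpow_mul hx.le,
    Real.mul_rpow hxb.le (by positivity), ← Real.rpow_mul hx.le,
    Real.mul_rpow hyx.le (by positivity), ← Real.rpow_mul hy.le]
  have cx : x ^ (b * (1 - β)) * x ^ ((b - 1) * (β * ν)) * x ^ (b * (β * (1 - ν)))
      = x ^ (b - β * ν) := by
    rw [← Real.rpow_add hx, ← Real.rpow_add hx]
    congr 1
    ring
  have cyx : (y - x) ^ (β * ν) * (y - x) ^ (β * (1 - ν)) = (y - x) ^ β := by
    rw [← Real.rpow_add hyx]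
    congr 1
    ring
  have cy : y ^ (-1 * (β * (1 - ν))) = y ^ (-(β * (1 - ν))) := by
    congr 1
    ring
  calc x ^ (b * (1 - β)) * (|b| ^ (β * ν) * ((y - x) ^ (β * ν) * x ^ ((b - 1) * (β * ν))) *
        (x ^ (b * (β * (1 - ν))) * ((y - x) ^ (β * (1 - ν)) * y ^ (-1 * (β * (1 - ν))))))
      = |b| ^ (β * ν) * ((y - x) ^ (β * ν) * (y - x) ^ (β * (1 - ν))) *
        (x ^ (b * (1 - β)) * x ^ ((b - 1) * (β * ν)) * x ^ (b * (β * (1 - ν)))) *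
        y ^ (-1 * (β * (1 - ν))) := by ring
    _ = |b| ^ (β * ν) * (y - x) ^ β * x ^ (b - β * ν) * y ^ (-(β * (1 - ν))) := by
        rw [cx, cyx, cy]

theorem stmt_4 (a b β ν : ℝ) (ha : -1 < a) (hb0 : -1 < b) (hb1 : b < 0) (hb2 : |b| < 1 + a)
    (hβ : β ∈ Set.Icc (0:ℝ) 1) (hν : ν ∈ Set.Icc (0:ℝ) 1) (hβν : β * ν < 1 + b) :
    ∃ C > (0:ℝ), ∀ t s t' s' : ℝ, 0 < s' → s' < t' → t' < s → s < t →
      (1 / (2 * Beta (a + 1) (b + 1))) *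
          (∫ u in s'..t', u ^ a * ((s - u) ^ b - (t - u) ^ b)) ≤
        C * max (s' ^ a) (s ^ a) * (t - s) ^ β * (t' - s') ^ (1 + b - β * ν) *
          (t - t') ^ (-(β * (1 - ν))) := by
  obtain ⟨hβ0, hβ1⟩ := hβ
  obtain ⟨hν0, hν1⟩ := hν
  have hb' : (0:ℝ) < |b| := abs_pos.mpr hb1.ne
  have he2 : (0:ℝ) ≤ β * ν := mul_nonneg hβ0 hν0
  have he3 : (0:ℝ) ≤ β * (1 - ν) := mul_nonneg hβ0 (by linarith)
  have hP0 : (0:ℝ) < 1 + b - β * ν := by linarith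
  have hP1 : 1 + b - β * ν ≤ 1 := by linarith
  have hBeta : 0 < Beta (a + 1) (b + 1) := by
    unfold Beta
    have g1 : 0 < Real.Gamma (a + 1) := Real.Gamma_pos_of_pos (by linarith)
    have g2 : 0 < Real.Gamma (b + 1) := Real.Gamma_pos_of_pos (by linarith)
    have g3 : 0 < Real.Gamma (a + 1 + (b + 1)) := Real.Gamma_pos_of_pos (by linarith)
    positivity
  refine ⟨|b| ^ (β * ν) / (2 * Beta (a + 1) (b + 1) * (1 + b - β * ν)),
    div_pos (Real.rpow_pos_of_pos hb' _) (by positivity), ?_⟩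
  intro t s t' s' hs' hs't' ht's hst
  have ht'0 : 0 < t' := hs'.trans hs't'
  have hM : 0 < max (s' ^ a) (s ^ a) :=
    lt_max_iff.mpr (Or.inl (Real.rpow_pos_of_pos hs' a))
  set M := max (s' ^ a) (s ^ a) with hMdef
  set K := M * (|b| ^ (β * ν) * ((t - s) ^ β * (t - t') ^ (-(β * (1 - ν))))) with hKdef
  have hK : 0 ≤ K := mul_nonneg hM.le (mul_nonneg (Real.rpow_nonneg (abs_nonneg b) _)
    (mul_nonneg (Real.rpow_nonneg (by linarith) _) (Real.rpow_nonneg (by linarith) _)))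
  -- pointwise bound
  have hpt : ∀ u ∈ Set.Icc s' t',
      u ^ a * ((s - u) ^ b - (t - u) ^ b) ≤ K * (s - u) ^ (b - β * ν) := by
    intro u hu
    obtain ⟨hu1, hu2⟩ := hu
    have hu0 : 0 < u := lt_of_lt_of_le hs' hu1
    have hsu : 0 < s - u := by linarith
    have hsu_lt : s - u < t - u := by linarith
    have hDpos : 0 < (s - u) ^ b - (t - u) ^ b :=
      sub_pos.mpr (Real.rpow_lt_rpow_of_neg hsu hsu_lt hb1)
    have hua : u ^ a ≤ M := by
      rcases le_or_gt 0 a with h | h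
      · exact le_max_of_le_right (Real.rpow_le_rpow hu0.le (by linarith) h)
      · exact le_max_of_le_left (Real.rpow_le_rpow_of_nonpos hs' hu1 h.le)
    have hD := aux_ptwise hb0 hb1 hβ0 hβ1 hν0 hν1 hsu hsu_lt
    rw [show t - u - (s - u) = t - s by ring] at hD
    have hD2 : (s - u) ^ b - (t - u) ^ b ≤
        |b| ^ (β * ν) * (t - s) ^ β * (s - u) ^ (b - β * ν) * (t - t') ^ (-(β * (1 - ν))) := by
      refine hD.trans ?_
      have hmono : (t - u) ^ (-(β * (1 - ν))) ≤ (t - t') ^ (-(β * (1 - ν))) :=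
        Real.rpow_le_rpow_of_nonpos (by linarith) (by linarith) (neg_nonpos.mpr he3)
      exact mul_le_mul_of_nonneg_left hmono
        (mul_nonneg (mul_nonneg (Real.rpow_nonneg (abs_nonneg b) _)
          (Real.rpow_nonneg (by linarith) _)) (Real.rpow_nonneg hsu.le _))
    calc u ^ a * ((s - u) ^ b - (t - u) ^ b)
        ≤ M * (|b| ^ (β * ν) * (t - s) ^ β * (s - u) ^ (b - β * ν) *
            (t - t') ^ (-(β * (1 - ν)))) :=
          mul_le_mul hua hD2 hDpos.le hM.le
      _ = K * (s - u) ^ (b - β * ν) := by rw [hKdef]; ring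
  -- integrability
  have hcont1 : ContinuousOn (fun u : ℝ => u ^ a * ((s - u) ^ b - (t - u) ^ b))
      (Set.uIcc s' t') := by
    rw [Set.uIcc_of_le hs't'.le]
    refine ContinuousOn.mul ?_ (ContinuousOn.sub ?_ ?_)
    · exact continuousOn_id.rpow_const fun u hu => Or.inl (ne_of_gt (lt_of_lt_of_le hs' hu.1))
    · exact (continuousOn_const.sub continuousOn_id).rpow_const
        fun u hu => Or.inl (ne_of_gt (by simp only [Pi.sub_apply, id]; linarith [hu.2]))
    · exact (continuousOn_const.sub continuousOn_id).rpow_const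
        fun u hu => Or.inl (ne_of_gt (by simp only [Pi.sub_apply, id]; linarith [hu.2]))
  have hcont2 : ContinuousOn (fun u : ℝ => K * (s - u) ^ (b - β * ν)) (Set.uIcc s' t') := by
    rw [Set.uIcc_of_le hs't'.le]
    refine continuousOn_const.mul ?_
    exact (continuousOn_const.sub continuousOn_id).rpow_const
      fun u hu => Or.inl (ne_of_gt (by simp only [Pi.sub_apply, id]; linarith [hu.2]))
  have int1 : IntervalIntegrable (fun u : ℝ => u ^ a * ((s - u) ^ b - (t - u) ^ b))
      MeasureTheory.volume s' t' := hcont1.intervalIntegrable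
  have int2 : IntervalIntegrable (fun u : ℝ => K * (s - u) ^ (b - β * ν))
      MeasureTheory.volume s' t' := hcont2.intervalIntegrable
  have hmono := intervalIntegral.integral_mono_on hs't'.le int1 int2 hpt
  -- compute the majorizing integral
  have hint : (∫ u in s'..t', K * (s - u) ^ (b - β * ν)) =
      K * (((s - s') ^ (1 + b - β * ν) - (s - t') ^ (1 + b - β * ν)) / (1 + b - β * ν)) := by
    rw [intervalIntegral.integral_const_mul]
    congr 1
    have hc := intervalIntegral.integral_comp_sub_left (a := s') (b := t')
      (fun v : ℝ => v ^ (b - β * ν)) s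
    rw [hc, integral_rpow (Or.inl (by linarith : (-1:ℝ) < b - β * ν)),
      show b - β * ν + 1 = 1 + b - β * ν by ring]
  have hsub : (s - s') ^ (1 + b - β * ν) - (s - t') ^ (1 + b - β * ν) ≤
      (t' - s') ^ (1 + b - β * ν) := by
    have h := aux_subadd (show (0:ℝ) < s - t' by linarith) (show (0:ℝ) < t' - s' by linarith)
      hP0 hP1
    rw [show s - t' + (t' - s') = s - s' by ring] at h
    linarith
  have hstep : (∫ u in s'..t', u ^ a * ((s - u) ^ b - (t - u) ^ b)) ≤
      K * ((t' - s') ^ (1 + b - β * ν) / (1 + b - β * ν)) := by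
    refine (hmono.trans_eq hint).trans ?_
    exact mul_le_mul_of_nonneg_left ((div_le_div_iff_of_pos_right hP0).mpr hsub) hK
  have h2B : 2 * Beta (a + 1) (b + 1) ≠ 0 := (mul_pos two_pos hBeta).ne'
  have hPne : 1 + b - β * ν ≠ 0 := hP0.ne'
  calc (1 / (2 * Beta (a + 1) (b + 1))) *
        (∫ u in s'..t', u ^ a * ((s - u) ^ b - (t - u) ^ b))
      ≤ (1 / (2 * Beta (a + 1) (b + 1))) *
        (K * ((t' - s') ^ (1 + b - β * ν) / (1 + b - β * ν))) :=
      mul_le_mul_of_nonneg_left hstep (by positivity)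
    _ = |b| ^ (β * ν) / (2 * Beta (a + 1) (b + 1) * (1 + b - β * ν)) * M * (t - s) ^ β *
        (t' - s') ^ (1 + b - β * ν) * (t - t') ^ (-(β * (1 - ν))) := by
      rw [hKdef]
      field_simp
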